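/- Fix n > 4. For each i : Fin n let W_i be the map on states (Fin n → ZMod 2) given by the Wolfram rule 29 local function at i: it replaces y_i by 0 when y_{i−1} = y_{i+1} = 1, replaces y_i by y_i + 1 when (y_{i−1}, y_{i+1}) = (1, 0), leaves y_i unchanged when (y_{i−1}, y_{i+1}) = (0, 1), and replaces y_i by 1 when y_{i−1} = y_{i+1} = 0. Then each W_i maps N_BCF bijectively onto itself, and the subgroup of the permutation group of N_BCF generated by these restrictions is isomorphic to the direct product of n copies of ℤ/2ℤ; in particular it has order 2^n. -/

import Mathlib

section Stmt15Aux


variable {n : ℕ} [NeZero n]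

/-- membership predicate for N_BCF -/
def s15P (y : Fin n → ZMod 2) : Prop :=
  (∀ i : Fin n, ¬(y i = 0 ∧ y (i + 1) = 0 ∧ y (i + 2) = 0)) ∧
  (∀ i : Fin n, ¬(y i = 1 ∧ y (i + 1) = 1 ∧ y (i + 2) = 1)) ∧
  (∀ i : Fin n, ¬(y i = 1 ∧ y (i + 1) = 1 ∧ y (i + 2) = 0 ∧ y (i + 3) = 0))

/-- flip condition at i -/
def s15C (i : Fin n) (y : Fin n → ZMod 2) : Prop := y (i - 1) = 1 ∧ y (i + 1) = 0

instance (i : Fin n) (y : Fin n → ZMod 2) : Decidable (s15C i y) := by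
  unfold s15C; infer_instance

/-- the restricted rule-29 map -/
def s15W (i : Fin n) (y : Fin n → ZMod 2) : Fin n → ZMod 2 :=
  if s15C i y then Function.update y i (y i + 1) else y

lemma s15z2 (x : ZMod 2) : x = 0 ∨ x = 1 := by revert x; decide

lemma s15c1 (hn : 4 < n) : (1 : Fin n) ≠ 0 := by
  intro h; have h' : 1 % n = 0 := congrArg Fin.val h
  rw [Nat.mod_eq_of_lt (by omega)] at h'; exact one_ne_zero h'

lemma s15c2 (hn : 4 < n) : (2 : Fin n) ≠ 0 := by
  intro h; have h' : 2 % n = 0 := congrArg Fin.val h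
  rw [Nat.mod_eq_of_lt (by omega)] at h'; exact two_ne_zero h'

lemma s15c3 (hn : 4 < n) : (3 : Fin n) ≠ 0 := by
  intro h; have h' : 3 % n = 0 := congrArg Fin.val h
  rw [Nat.mod_eq_of_lt (by omega)] at h'; exact three_ne_zero h'

lemma s15d1 (hn : 4 < n) (i : Fin n) : i + 1 ≠ i := fun h =>
  s15c1 hn (by rwa [add_eq_left] at h)
lemma s15d2 (hn : 4 < n) (i : Fin n) : i + 2 ≠ i := fun h =>
  s15c2 hn (by rwa [add_eq_left] at h)
lemma s15d3 (hn : 4 < n) (i : Fin n) : i + 3 ≠ i := fun h =>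
  s15c3 hn (by rwa [add_eq_left] at h)
lemma s15m1 (hn : 4 < n) (i : Fin n) : i - 1 ≠ i := fun h =>
  s15c1 hn (by rwa [sub_eq_self] at h)
lemma s15m2 (hn : 4 < n) (i : Fin n) : i - 2 ≠ i := fun h =>
  s15c2 hn (by rwa [sub_eq_self] at h)

lemma s15facts (hn : 4 < n) {y : Fin n → ZMod 2} (hy : s15P y) {i : Fin n}
    (h1 : y (i - 1) = 1) (h0 : y (i + 1) = 0) : y (i + 2) = 1 ∧ y (i - 2) = 0 := by
  have e1 : i - 1 + 1 = i := by grind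
  have e2 : i - 1 + 2 = i + 1 := by grind
  have e3 : i - 1 + 3 = i + 2 := by grind
  have f1 : i - 2 + 1 = i - 1 := by grind
  have f2 : i - 2 + 2 = i := by grind
  have f3 : i - 2 + 3 = i + 1 := by grind
  obtain ⟨hA, hB, hD⟩ := hy
  have h2 : y (i + 2) = 1 := by
    rcases s15z2 (y (i+2)) with h' | h'
    · rcases s15z2 (y i) with h | h
      · exact absurd ⟨h, h0, h'⟩ (hA i)
      · have := hD (i-1); rw [e1, e2, e3] at this
        exact absurd ⟨h1, h, h0, h'⟩ this
    · exact h'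
  refine ⟨h2, ?_⟩
  rcases s15z2 (y (i-2)) with h' | h'
  · exact h'
  · rcases s15z2 (y i) with h | h
    · have := hD (i-2); rw [f1, f2, f3] at this
      exact absurd ⟨h', h1, h, h0⟩ this
    · have := hB (i-2); rw [f1, f2] at this
      exact absurd ⟨h', h1, h⟩ this

lemma s15flip_mem (hn : 4 < n) {y : Fin n → ZMod 2} (hy : s15P y) {i : Fin n}
    (h1 : y (i - 1) = 1) (h0 : y (i + 1) = 0) :
    s15P (Function.update y i (y i + 1)) := by
  obtain ⟨F2, F4⟩ := s15facts hn hy h1 h0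
  obtain ⟨hA, hB, hD⟩ := hy
  have e1 : i - 1 + 1 = i := by grind
  have e2 : i - 1 + 2 = i + 1 := by grind
  have e3 : i - 1 + 3 = i + 2 := by grind
  have f1 : i - 2 + 1 = i - 1 := by grind
  have g1 : i - 3 + 1 = i - 2 := by grind
  refine ⟨fun j h => ?_, fun j h => ?_, fun j h => ?_⟩
  · obtain ⟨a, b, c⟩ := h
    by_cases e0 : j = i
    · subst e0
      rw [Function.update_of_ne (s15d2 hn j)] at c
      rw [F2] at c; exact one_ne_zero c
    by_cases ee1 : j = i - 1
    · subst ee1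
      rw [Function.update_of_ne (s15m1 hn i)] at a
      rw [h1] at a; exact one_ne_zero a
    by_cases ee2 : j = i - 2
    · subst ee2
      rw [f1, Function.update_of_ne (s15m1 hn i)] at b
      rw [h1] at b; exact one_ne_zero b
    · rw [Function.update_of_ne e0] at a
      rw [Function.update_of_ne (fun h => ee1 (eq_sub_of_add_eq h))] at b
      rw [Function.update_of_ne (fun h => ee2 (eq_sub_of_add_eq h))] at c
      exact hA j ⟨a, b, c⟩
  · obtain ⟨a, b, c⟩ := h
    by_cases e0 : j = i
    · subst e0
      rw [Function.update_of_ne (s15d1 hn j)] at b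
      rw [h0] at b; exact zero_ne_one b
    by_cases ee1 : j = i - 1
    · subst ee1
      rw [e2, Function.update_of_ne (s15d1 hn i)] at c
      rw [h0] at c; exact zero_ne_one c
    by_cases ee2 : j = i - 2
    · subst ee2
      rw [Function.update_of_ne (s15m2 hn i)] at a
      rw [F4] at a; exact zero_ne_one a
    · rw [Function.update_of_ne e0] at a
      rw [Function.update_of_ne (fun h => ee1 (eq_sub_of_add_eq h))] at b
      rw [Function.update_of_ne (fun h => ee2 (eq_sub_of_add_eq h))] at c
      exact hB j ⟨a, b, c⟩
  · obtain ⟨a, b, c, d⟩ := h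
    by_cases e0 : j = i
    · subst e0
      rw [Function.update_of_ne (s15d1 hn j)] at b
      rw [h0] at b; exact zero_ne_one b
    by_cases ee1 : j = i - 1
    · subst ee1
      rw [e3, Function.update_of_ne (s15d2 hn i)] at d
      rw [F2] at d; exact one_ne_zero d
    by_cases ee2 : j = i - 2
    · subst ee2
      rw [Function.update_of_ne (s15m2 hn i)] at a
      rw [F4] at a; exact zero_ne_one a
    by_cases ee3 : j = i - 3
    · subst ee3
      rw [g1, Function.update_of_ne (s15m2 hn i)] at b
      rw [F4] at b; exact zero_ne_one b
    · rw [Function.update_of_ne e0] at a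
      rw [Function.update_of_ne (fun h => ee1 (eq_sub_of_add_eq h))] at b
      rw [Function.update_of_ne (fun h => ee2 (eq_sub_of_add_eq h))] at c
      rw [Function.update_of_ne (fun h => ee3 (eq_sub_of_add_eq h))] at d
      exact hD j ⟨a, b, c, d⟩

lemma s15W_mem (hn : 4 < n) {y : Fin n → ZMod 2} (hy : s15P y) (i : Fin n) :
    s15P (s15W i y) := by
  unfold s15W; split_ifs with h
  · exact s15flip_mem hn hy h.1 h.2
  · exact hy

lemma s15C_invariant (hn : 4 < n) {y : Fin n → ZMod 2} (hy : s15P y) (j k : Fin n) :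
    s15C k (s15W j y) ↔ s15C k y := by
  unfold s15W
  split_ifs with h
  · obtain ⟨F2, F4⟩ := s15facts hn hy h.1 h.2
    by_cases hk1 : k = j + 1
    · subst hk1
      have p1 : j + 1 - 1 = j := by grind
      have p2 : j + 1 + 1 = j + 2 := by grind
      unfold s15C
      rw [p1, p2, Function.update_self,
        Function.update_of_ne (s15d2 hn j), F2]
      constructor
      · rintro ⟨-, hx⟩; exact absurd hx one_ne_zero
      · rintro ⟨-, hx⟩; exact absurd hx one_ne_zero
    by_cases hk2 : k = j - 1
    · subst hk2
      have p1 : j - 1 - 1 = j - 2 := by grind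
      unfold s15C
      rw [p1, Function.update_of_ne (s15m2 hn j), F4]
      constructor
      · rintro ⟨hx, -⟩; exact absurd hx zero_ne_one
      · rintro ⟨hx, -⟩; exact absurd hx zero_ne_one
    · unfold s15C
      rw [Function.update_of_ne (fun hh : k - 1 = j => hk1 (by rw [← hh]; grind)),
        Function.update_of_ne (fun hh : k + 1 = j => hk2 (eq_sub_of_add_eq hh))]
  · rfl

lemma s15W_invol (hn : 4 < n) {y : Fin n → ZMod 2} (hy : s15P y) (i : Fin n) :
    s15W i (s15W i y) = y := by
  unfold s15W
  by_cases h : s15C i y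
  · rw [if_pos h]
    have hc : s15C i (Function.update y i (y i + 1)) := by
      unfold s15C
      rw [Function.update_of_ne (s15m1 hn i), Function.update_of_ne (s15d1 hn i)]
      exact h
    rw [if_pos hc, Function.update_self, Function.update_idem,
      show y i + 1 + 1 = y i from by
        have : ∀ a : ZMod 2, a + 1 + 1 = a := by decide
        exact this _,
      Function.update_eq_self]
  · rw [if_neg h, if_neg h]

lemma s15W_comm (hn : 4 < n) {y : Fin n → ZMod 2} (hy : s15P y) (i j : Fin n) :
    s15W i (s15W j y) = s15W j (s15W i y) := by
  by_cases hij : i = j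
  · subst hij; rfl
  have ci := s15C_invariant hn hy j i
  have cj := s15C_invariant hn hy i j
  by_cases hi : s15C i y <;> by_cases hj : s15C j y
  · have hWj : s15W j y = Function.update y j (y j + 1) := if_pos hj
    have hWi : s15W i y = Function.update y i (y i + 1) := if_pos hi
    have L : s15W i (s15W j y) =
        Function.update (s15W j y) i ((s15W j y) i + 1) := if_pos (ci.mpr hi)
    have R : s15W j (s15W i y) =
        Function.update (s15W i y) j ((s15W i y) j + 1) := if_pos (cj.mpr hj)
    rw [L, R, hWj, hWi, Function.update_of_ne hij, Function.update_of_ne (Ne.symm hij),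
      Function.update_comm hij]
  · have hWj : s15W j y = y := if_neg hj
    rw [hWj]
    have : s15W j (s15W i y) = s15W i y := if_neg (fun hc => hj (cj.mp hc))
    rw [this]
  · have hWi : s15W i y = y := if_neg hi
    rw [hWi]
    have : s15W i (s15W j y) = s15W j y := if_neg (fun hc => hi (ci.mp hc))
    rw [this]
  · have a1 : s15W j y = y := if_neg hj
    have a2 : s15W i y = y := if_neg hi
    rw [a1, a2, a1]

lemma s15W_apply (hn : 4 < n) (y : Fin n → ZMod 2) (i k : Fin n) :
    s15W i y k = if k = i ∧ s15C i y then y k + 1 else y k := by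
  unfold s15W
  split_ifs with h1 h2 h2
  · rw [h2.1, Function.update_self]
  · exact Function.update_of_ne (fun hk => h2 ⟨hk, h1⟩) _ _
  · exact absurd h2.2 h1
  · rfl

/-- rotation invariance -/
lemma s15P_rot {y : Fin n → ZMod 2} (hy : s15P y) (c : Fin n) :
    s15P (fun k => y (k + c)) := by
  obtain ⟨hA, hB, hD⟩ := hy
  refine ⟨fun i => ?_, fun i => ?_, fun i => ?_⟩
  · have := hA (i + c)
    simpa [add_right_comm] using this
  · have := hB (i + c)
    simpa [add_right_comm] using this
  · have := hD (i + c)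
    simpa [add_right_comm] using this

lemma s15ite0 {p : Prop} [Decidable p] (h : (if p then (1:ZMod 2) else 0) = 0) : ¬p := by
  intro hp; rw [if_pos hp] at h; exact one_ne_zero h

lemma s15ite1 {p : Prop} [Decidable p] (h : (if p then (1:ZMod 2) else 0) = 1) : p := by
  by_contra hp; rw [if_neg hp] at h; exact zero_ne_one h

lemma s15v1 (hn : 4 < n) (i : Fin n) : (i+1).val = (i.val + 1) % n := by
  rw [Fin.val_add, show ((1:Fin n)).val = 1 % n from rfl, Nat.mod_eq_of_lt (show 1 < n by omega)]

lemma s15v2 (hn : 4 < n) (i : Fin n) : (i+2).val = (i.val + 2) % n := by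
  rw [Fin.val_add, show ((2:Fin n)).val = 2 % n from rfl, Nat.mod_eq_of_lt (show 2 < n by omega)]

lemma s15v3 (hn : 4 < n) (i : Fin n) : (i+3).val = (i.val + 3) % n := by
  rw [Fin.val_add, show ((3:Fin n)).val = 3 % n from rfl, Nat.mod_eq_of_lt (show 3 < n by omega)]

lemma s15mod3 (a k : ℕ) (ha : a < n) (hk : 0 < k ∧ k ≤ 3 ∧ k < n) :
    (a + k < n ∧ (a + k) % n = a + k) ∨ (n ≤ a + k ∧ (a + k) % n = a + k - n) := by
  rcases lt_or_ge (a+k) n with h | h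
  · exact Or.inl ⟨h, Nat.mod_eq_of_lt h⟩
  · right; refine ⟨h, ?_⟩
    rw [Nat.mod_eq_sub_mod h, Nat.mod_eq_of_lt (by omega)]

lemma s15base (hn : 4 < n) : ∃ (y : Fin n → ZMod 2) (i0 : Fin n), s15P y ∧ s15C i0 y := by
  rcases Nat.even_or_odd n with he | ho
  · -- n even : y = 0 1 1 0 1 0 1 0 ...
    have hpar : n % 2 = 0 := Nat.even_iff.mp he
    refine ⟨fun k => if (k.val = 1 ∨ k.val = 2 ∨ (4 ≤ k.val ∧ k.val % 2 = 0)) then 1 else 0,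
      ⟨2 % n, Nat.mod_lt _ (by omega)⟩, ⟨fun i h => ?_, fun i h => ?_, fun i h => ?_⟩, ?_, ?_⟩
    · obtain ⟨a, b, c⟩ := h
      have ha := s15ite0 a; have hb := s15ite0 b; have hc := s15ite0 c
      rw [s15v1 hn] at hb; rw [s15v2 hn] at hc
      rcases s15mod3 i.val 1 i.isLt (by omega) with ⟨hl1, m1⟩ | ⟨hl1, m1⟩ <;>
        rcases s15mod3 i.val 2 i.isLt (by omega) with ⟨hl2, m2⟩ | ⟨hl2, m2⟩ <;>
        rw [m1] at hb <;> rw [m2] at hc <;> omega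
    · obtain ⟨a, b, c⟩ := h
      have ha := s15ite1 a; have hb := s15ite1 b; have hc := s15ite1 c
      rw [s15v1 hn] at hb; rw [s15v2 hn] at hc
      rcases s15mod3 i.val 1 i.isLt (by omega) with ⟨hl1, m1⟩ | ⟨hl1, m1⟩ <;>
        rcases s15mod3 i.val 2 i.isLt (by omega) with ⟨hl2, m2⟩ | ⟨hl2, m2⟩ <;>
        rw [m1] at hb <;> rw [m2] at hc <;> omega
    · obtain ⟨a, b, c, d⟩ := h
      have ha := s15ite1 a; have hb := s15ite1 b
      have hc := s15ite0 c; have hd := s15ite0 d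
      rw [s15v1 hn] at hb; rw [s15v2 hn] at hc; rw [s15v3 hn] at hd
      rcases s15mod3 i.val 1 i.isLt (by omega) with ⟨hl1, m1⟩ | ⟨hl1, m1⟩ <;>
        rcases s15mod3 i.val 2 i.isLt (by omega) with ⟨hl2, m2⟩ | ⟨hl2, m2⟩ <;>
        rcases s15mod3 i.val 3 i.isLt (by omega) with ⟨hl3, m3⟩ | ⟨hl3, m3⟩ <;>
        rw [m1] at hb <;> rw [m2] at hc <;> rw [m3] at hd <;> omega
    · -- y (i0 - 1) = 1
      have e : (⟨2 % n, Nat.mod_lt _ (by omega)⟩ : Fin n) - 1 = ⟨1, by omega⟩ := by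
        rw [sub_eq_iff_eq_add]
        apply Fin.ext
        rw [s15v1 hn]
      rw [e]
      exact if_pos (Or.inl rfl)
    · -- y (i0 + 1) = 0
      have h2 : (2 % n) = 2 := Nat.mod_eq_of_lt (by omega)
      have e : (⟨2 % n, Nat.mod_lt _ (by omega)⟩ : Fin n) + 1 = ⟨3, by omega⟩ := by
        apply Fin.ext
        rw [s15v1 hn]
        simp only [h2]
        exact Nat.mod_eq_of_lt (by omega)
      rw [e]
      exact if_neg (by show ¬((3:ℕ) = 1 ∨ (3:ℕ) = 2 ∨ 4 ≤ (3:ℕ) ∧ 3 % 2 = 0); omega)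
  · -- n odd : y = 0 1 0 1 ... 0 1 0 ; flip position n-1
    have hpar : n % 2 = 1 := Nat.odd_iff.mp ho
    refine ⟨fun k => if k.val % 2 = 1 then 1 else 0,
      ⟨n - 1, by omega⟩, ⟨fun i h => ?_, fun i h => ?_, fun i h => ?_⟩, ?_, ?_⟩
    · obtain ⟨a, b, c⟩ := h
      have ha := s15ite0 a; have hb := s15ite0 b; have hc := s15ite0 c
      rw [s15v1 hn] at hb; rw [s15v2 hn] at hc
      rcases s15mod3 i.val 1 i.isLt (by omega) with ⟨hl1, m1⟩ | ⟨hl1, m1⟩ <;>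
        rcases s15mod3 i.val 2 i.isLt (by omega) with ⟨hl2, m2⟩ | ⟨hl2, m2⟩ <;>
        rw [m1] at hb <;> rw [m2] at hc <;> omega
    · obtain ⟨a, b, c⟩ := h
      have ha := s15ite1 a; have hb := s15ite1 b; have hc := s15ite1 c
      rw [s15v1 hn] at hb; rw [s15v2 hn] at hc
      rcases s15mod3 i.val 1 i.isLt (by omega) with ⟨hl1, m1⟩ | ⟨hl1, m1⟩ <;>
        rcases s15mod3 i.val 2 i.isLt (by omega) with ⟨hl2, m2⟩ | ⟨hl2, m2⟩ <;>
        rw [m1] at hb <;> rw [m2] at hc <;> omega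
    · obtain ⟨a, b, c, d⟩ := h
      have ha := s15ite1 a; have hb := s15ite1 b
      rw [s15v1 hn] at hb
      rcases s15mod3 i.val 1 i.isLt (by omega) with ⟨hl1, m1⟩ | ⟨hl1, m1⟩ <;>
        rw [m1] at hb <;> omega
    · have e : (⟨n - 1, by omega⟩ : Fin n) - 1 = ⟨n - 2, by omega⟩ := by
        rw [sub_eq_iff_eq_add]
        apply Fin.ext
        rw [s15v1 hn]
        show n - 1 = (n - 2 + 1) % n
        rw [Nat.mod_eq_of_lt (by omega)]
        omega
      rw [e]
      exact if_pos (by show (n - 2) % 2 = 1; omega)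
    · have e : (⟨n - 1, by omega⟩ : Fin n) + 1 = ⟨0, by omega⟩ := by
        apply Fin.ext
        rw [s15v1 hn]
        show (n - 1 + 1) % n = 0
        rw [show n - 1 + 1 = n from by omega, Nat.mod_self]
      rw [e]
      exact if_neg (by show ¬((0:ℕ) % 2 = 1); omega)

lemma s15witness (hn : 4 < n) (i : Fin n) : ∃ y : Fin n → ZMod 2, s15P y ∧ s15C i y := by
  obtain ⟨y0, i0, hy0, hc0⟩ := s15base hn
  refine ⟨fun k => y0 (k + (i0 - i)), s15P_rot hy0 _, ?_, ?_⟩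
  · show y0 (i - 1 + (i0 - i)) = 1
    rw [show i - 1 + (i0 - i) = i0 - 1 by grind]
    exact hc0.1
  · show y0 (i + 1 + (i0 - i)) = 0
    rw [show i + 1 + (i0 - i) = i0 + 1 by grind]
    exact hc0.2

def s15g (hn : 4 < n) (i : Fin n) : Equiv.Perm ↥{y : Fin n → ZMod 2 | s15P y} where
  toFun y := ⟨s15W i y.1, s15W_mem hn y.2 i⟩
  invFun y := ⟨s15W i y.1, s15W_mem hn y.2 i⟩
  left_inv y := Subtype.ext (s15W_invol hn y.2 i)
  right_inv y := Subtype.ext (s15W_invol hn y.2 i)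

lemma s15g_sq (hn : 4 < n) (i : Fin n) : s15g hn i * s15g hn i = 1 :=
  Equiv.ext fun y => Subtype.ext (s15W_invol hn y.2 i)

lemma s15g_comm (hn : 4 < n) (i j : Fin n) : Commute (s15g hn i) (s15g hn j) :=
  Equiv.ext fun y => Subtype.ext (s15W_comm hn y.2 i j)

def s15f (hn : 4 < n) (i : Fin n) :
    Multiplicative (ZMod 2) →* Equiv.Perm ↥{y : Fin n → ZMod 2 | s15P y} where
  toFun x := if Multiplicative.toAdd x = 1 then s15g hn i else 1
  map_one' := by
    show (if Multiplicative.toAdd (1 : Multiplicative (ZMod 2)) = 1 then s15g hn i else 1) = 1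
    rw [if_neg (by decide)]
  map_mul' x y := by
    show (if Multiplicative.toAdd (x * y) = 1 then s15g hn i else 1) =
      (if Multiplicative.toAdd x = 1 then s15g hn i else 1) *
      (if Multiplicative.toAdd y = 1 then s15g hn i else 1)
    have hxy : Multiplicative.toAdd (x * y) =
        Multiplicative.toAdd x + Multiplicative.toAdd y := rfl
    by_cases hx : Multiplicative.toAdd x = 1 <;> by_cases hy : Multiplicative.toAdd y = 1
    · rw [if_pos hx, if_pos hy, if_neg (by rw [hxy, hx, hy]; decide), s15g_sq hn i]
    · have hy0 : Multiplicative.toAdd y = 0 := (s15z2 _).resolve_right hy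
      rw [if_pos hx, if_neg hy, if_pos (by rw [hxy, hx, hy0]; decide), mul_one]
    · have hx0 : Multiplicative.toAdd x = 0 := (s15z2 _).resolve_right hx
      rw [if_neg hx, if_pos hy, if_pos (by rw [hxy, hx0, hy]; decide), one_mul]
    · have hx0 : Multiplicative.toAdd x = 0 := (s15z2 _).resolve_right hx
      have hy0 : Multiplicative.toAdd y = 0 := (s15z2 _).resolve_right hy
      rw [if_neg hx, if_neg hy, if_neg (by rw [hxy, hx0, hy0]; decide), mul_one]

lemma s15f_comm (hn : 4 < n) :
    Pairwise fun i j => ∀ x y, Commute (s15f hn i x) (s15f hn j y) := by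
  intro i j _ x y
  show Commute (if Multiplicative.toAdd x = 1 then s15g hn i else 1)
    (if Multiplicative.toAdd y = 1 then s15g hn j else 1)
  split_ifs with h1 h2 h2
  · exact s15g_comm hn i j
  · exact Commute.one_right _
  · exact Commute.one_left _
  · exact Commute.one_left _

def s15phi (hn : 4 < n) :
    (Fin n → Multiplicative (ZMod 2)) →* Equiv.Perm ↥{y : Fin n → ZMod 2 | s15P y} :=
  MonoidHom.noncommPiCoprod (s15f hn) (s15f_comm hn)

lemma s15f_step (hn : 4 < n) (a : Fin n) (x : Multiplicative (ZMod 2))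
    (z : ↥{y : Fin n → ZMod 2 | s15P y}) (i : Fin n) :
    ((s15f hn a x) z).1 i =
      z.1 i + (if i = a ∧ s15C a z.1 then Multiplicative.toAdd x else 0) := by
  by_cases hx : Multiplicative.toAdd x = 1
  · have : s15f hn a x = s15g hn a := if_pos hx
    rw [this]
    show s15W a z.1 i = _
    rw [s15W_apply hn]
    by_cases hc : i = a ∧ s15C a z.1
    · rw [if_pos hc, if_pos hc, hx]
    · rw [if_neg hc, if_neg hc, add_zero]
  · have hx0 : Multiplicative.toAdd x = 0 := (s15z2 _).resolve_right hx
    have : s15f hn a x = 1 := if_neg hx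
    rw [this, Equiv.Perm.one_apply, hx0, ite_self, add_zero]

lemma s15f_val (hn : 4 < n) (a : Fin n) (x : Multiplicative (ZMod 2))
    (z : ↥{y : Fin n → ZMod 2 | s15P y}) :
    ((s15f hn a x) z).1 = s15W a z.1 ∨ ((s15f hn a x) z).1 = z.1 := by
  by_cases hx : Multiplicative.toAdd x = 1
  · left; rw [show s15f hn a x = s15g hn a from if_pos hx]; rfl
  · right; rw [show s15f hn a x = 1 from if_neg hx]; rfl

lemma s15prod_C (hn : 4 < n) (v : Fin n → Multiplicative (ZMod 2)) (s : Finset (Fin n)) (hc)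
    (y : ↥{y : Fin n → ZMod 2 | s15P y}) (k : Fin n) :
    s15C k ((s.noncommProd (fun j => s15f hn j (v j)) hc) y).1 ↔ s15C k y.1 := by
  classical
  induction s using Finset.induction_on with
  | empty => rw [Finset.noncommProd_empty]; rfl
  | @insert a s ha ih =>
    rw [Finset.noncommProd_insert_of_notMem _ _ _ _ ha, Equiv.Perm.mul_apply]
    set z := (s.noncommProd (fun j => s15f hn j (v j)) _) y with hzdef
    rcases s15f_val hn a (v a) z with h | h
    · rw [h, s15C_invariant hn z.2 a k]
      exact ih _
    · rw [h]
      exact ih _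

lemma s15prod_apply (hn : 4 < n) (v : Fin n → Multiplicative (ZMod 2)) (s : Finset (Fin n)) (hc)
    (y : ↥{y : Fin n → ZMod 2 | s15P y}) (i : Fin n) :
    ((s.noncommProd (fun j => s15f hn j (v j)) hc) y).1 i =
      y.1 i + (if i ∈ s ∧ s15C i y.1 then Multiplicative.toAdd (v i) else 0) := by
  classical
  induction s using Finset.induction_on with
  | empty =>
    rw [Finset.noncommProd_empty]
    simp
  | @insert a s ha ih =>
    rw [Finset.noncommProd_insert_of_notMem _ _ _ _ ha, Equiv.Perm.mul_apply]
    set z := (s.noncommProd (fun j => s15f hn j (v j)) _) y with hzdef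
    rw [s15f_step hn a (v a) z i]
    have hCz : s15C a z.1 ↔ s15C a y.1 := s15prod_C hn v s _ y a
    have hz : z.1 i = y.1 i + (if i ∈ s ∧ s15C i y.1 then Multiplicative.toAdd (v i) else 0) :=
      ih _
    rw [hz]
    by_cases hia : i = a
    · subst hia
      rw [if_neg (fun hh : i ∈ s ∧ _ => ha (hh.1)), add_zero]
      by_cases hC : s15C i y.1
      · rw [if_pos ⟨rfl, hCz.mpr hC⟩, if_pos ⟨Finset.mem_insert_self i s, hC⟩]
      · rw [if_neg (fun hh => hC (hCz.mp hh.2)), if_neg (fun hh => hC hh.2), add_zero]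
    · rw [if_neg (fun hh : i = a ∧ _ => hia hh.1), add_zero]
      by_cases hmem : i ∈ s ∧ s15C i y.1
      · rw [if_pos hmem, if_pos ⟨Finset.mem_insert_of_mem hmem.1, hmem.2⟩]
      · rw [if_neg hmem, if_neg (fun hh => hmem ⟨(Finset.mem_insert.mp hh.1).resolve_left hia, hh.2⟩)]

lemma s15phi_apply (hn : 4 < n) (v : Fin n → Multiplicative (ZMod 2))
    (y : ↥{y : Fin n → ZMod 2 | s15P y}) (i : Fin n) :
    ((s15phi hn v) y).1 i =
      y.1 i + (if s15C i y.1 then Multiplicative.toAdd (v i) else 0) := by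
  have h : (s15phi hn v) = Finset.univ.noncommProd (fun j => s15f hn j (v j))
      (fun _ _ _ _ h => s15f_comm hn h _ _) := rfl
  rw [h]; refine (s15prod_apply hn v Finset.univ _ y i).trans ?_
  simp

lemma s15phi_inj (hn : 4 < n) : Function.Injective (s15phi hn) := by
  apply (injective_iff_map_eq_one (s15phi hn)).mpr
  intro v hv
  funext i
  obtain ⟨y0, hy0, hc0⟩ := s15witness hn i
  have key := s15phi_apply hn v ⟨y0, hy0⟩ i
  rw [hv, Equiv.Perm.one_apply, if_pos hc0] at key
  have : Multiplicative.toAdd (v i) = 0 := by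
    have h2 := key.symm
    rwa [add_eq_left] at h2
  calc v i = Multiplicative.ofAdd (Multiplicative.toAdd (v i)) := rfl
    _ = Multiplicative.ofAdd 0 := by rw [this]
    _ = 1 := rfl

lemma s15phi_range (hn : 4 < n) :
    (s15phi hn).range = Subgroup.closure (Set.range (s15g hn)) := by
  apply le_antisymm
  · rintro x ⟨v, rfl⟩
    have h : (s15phi hn v) = Finset.univ.noncommProd (fun j => s15f hn j (v j))
        (fun _ _ _ _ h => s15f_comm hn h _ _) := rfl
    rw [h]
    apply Subgroup.noncommProd_mem
    intro j _
    by_cases hx : Multiplicative.toAdd (v j) = 1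
    · rw [show s15f hn j (v j) = s15g hn j from if_pos hx]
      exact Subgroup.subset_closure ⟨j, rfl⟩
    · rw [show s15f hn j (v j) = 1 from if_neg hx]
      exact Subgroup.one_mem _
  · rw [Subgroup.closure_le]
    rintro x ⟨i, rfl⟩
    refine ⟨Pi.mulSingle i (Multiplicative.ofAdd 1), ?_⟩
    show MonoidHom.noncommPiCoprod (s15f hn) (s15f_comm hn) _ = _
    rw [MonoidHom.noncommPiCoprod_mulSingle]
    show (if Multiplicative.toAdd (Multiplicative.ofAdd (1:ZMod 2)) = 1 then s15g hn i else 1) = s15g hn i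
    exact if_pos rfl

end Stmt15Aux

/-- Each Wolfram rule 29 local function maps `N_BCF` (no cyclic
occurrence of 000, 111 or 1100) bijectively onto itself, and the group of
permutations of `N_BCF` generated by these restrictions is isomorphic to the
direct product of `n` copies of `ℤ/2ℤ`; in particular it has order `2^n`. -/
theorem stmt_15 {n : ℕ} [NeZero n] (hn : 4 < n)
    (W : Fin n → (Fin n → ZMod 2) → (Fin n → ZMod 2))
    (hW : ∀ (i : Fin n) (y : Fin n → ZMod 2),
      W i y =
        if y (i - 1) = 1 ∧ y (i + 1) = 1 then Function.update y i 0
        else if y (i - 1) = 1 ∧ y (i + 1) = 0 then Function.update y i (y i + 1)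
        else if y (i - 1) = 0 ∧ y (i + 1) = 1 then y
        else Function.update y i 1)
    (NBCF : Set (Fin n → ZMod 2))
    (hNBCF : ∀ y : Fin n → ZMod 2, y ∈ NBCF ↔
      (∀ i : Fin n, ¬(y i = 0 ∧ y (i + 1) = 0 ∧ y (i + 2) = 0)) ∧
      (∀ i : Fin n, ¬(y i = 1 ∧ y (i + 1) = 1 ∧ y (i + 2) = 1)) ∧
      (∀ i : Fin n,
        ¬(y i = 1 ∧ y (i + 1) = 1 ∧ y (i + 2) = 0 ∧ y (i + 3) = 0))) :
    (∀ i : Fin n, Set.BijOn (W i) NBCF NBCF) ∧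
    Nonempty (↥(Subgroup.closure {e : Equiv.Perm ↥NBCF |
        ∃ i : Fin n, ∀ y : ↥NBCF, (e y : Fin n → ZMod 2) = W i (y : Fin n → ZMod 2)})
      ≃* (Fin n → Multiplicative (ZMod 2))) ∧
    Nat.card ↥(Subgroup.closure {e : Equiv.Perm ↥NBCF |
        ∃ i : Fin n, ∀ y : ↥NBCF, (e y : Fin n → ZMod 2) = W i (y : Fin n → ZMod 2)})
      = 2 ^ n := by
  have hset : NBCF = {y : Fin n → ZMod 2 | s15P y} := Set.ext fun y => hNBCF y
  subst hset
  have hWeq : ∀ (i : Fin n) (y : Fin n → ZMod 2), s15P y → W i y = s15W i y := by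
    intro i y hy
    obtain ⟨hA, hB, hD⟩ := hy
    have e1 : i - 1 + 1 = i := by grind
    have e2 : i - 1 + 2 = i + 1 := by grind
    have hB' := hB (i - 1); rw [e1, e2] at hB'
    have hA' := hA (i - 1); rw [e1, e2] at hA'
    rw [hW]
    unfold s15W
    by_cases hc1 : y (i - 1) = 1 ∧ y (i + 1) = 1
    · rw [if_pos hc1, if_neg (fun hc => one_ne_zero (hc1.2.symm.trans hc.2))]
      have hyi : y i = 0 := by
        rcases s15z2 (y i) with h | h
        · exact h
        · exact absurd ⟨hc1.1, h, hc1.2⟩ hB'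
      rw [← hyi, Function.update_eq_self]
    · by_cases hc2 : y (i - 1) = 1 ∧ y (i + 1) = 0
      · rw [if_neg hc1, if_pos hc2, if_pos (show s15C i y from hc2)]
      · by_cases hc3 : y (i - 1) = 0 ∧ y (i + 1) = 1
        · rw [if_neg hc1, if_neg hc2, if_pos hc3, if_neg (show ¬ s15C i y from hc2)]
        · have h1 : y (i - 1) = 0 := by
            rcases s15z2 (y (i - 1)) with h | h
            · exact h
            · rcases s15z2 (y (i + 1)) with h' | h'
              · exact absurd ⟨h, h'⟩ hc2
              · exact absurd ⟨h, h'⟩ hc1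
          have h2 : y (i + 1) = 0 := by
            rcases s15z2 (y (i + 1)) with h' | h'
            · exact h'
            · exact absurd ⟨h1, h'⟩ hc3
          rw [if_neg hc1, if_neg hc2, if_neg hc3,
            if_neg (fun hc => zero_ne_one (h1.symm.trans hc.1))]
          have hyi : y i = 1 := by
            rcases s15z2 (y i) with h | h
            · exact absurd ⟨h1, h, h2⟩ hA'
            · exact h
          rw [← hyi, Function.update_eq_self]
  have hSet : {e : Equiv.Perm ↥{y : Fin n → ZMod 2 | s15P y} |
      ∃ i : Fin n, ∀ y : ↥{y : Fin n → ZMod 2 | s15P y},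
        (e y : Fin n → ZMod 2) = W i (y : Fin n → ZMod 2)} = Set.range (s15g hn) := by
    ext e
    constructor
    · rintro ⟨i, h⟩
      refine ⟨i, ?_⟩
      apply Equiv.ext
      intro y
      apply Subtype.ext
      show s15W i y.1 = (e y).1
      rw [h y, hWeq i y.1 y.2]
    · rintro ⟨i, rfl⟩
      refine ⟨i, fun y => ?_⟩
      show (s15g hn i y).1 = W i y.1
      rw [hWeq i y.1 y.2]
      rfl
  have hcl : Subgroup.closure {e : Equiv.Perm ↥{y : Fin n → ZMod 2 | s15P y} |
      ∃ i : Fin n, ∀ y : ↥{y : Fin n → ZMod 2 | s15P y},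
        (e y : Fin n → ZMod 2) = W i (y : Fin n → ZMod 2)} = (s15phi hn).range := by
    rw [hSet]
    exact (s15phi_range hn).symm
  refine ⟨?_, ?_, ?_⟩
  · intro i
    refine ⟨?_, ?_, ?_⟩
    · intro y hy
      have hy' : s15P y := hy
      show s15P (W i y)
      rw [hWeq i y hy']
      exact s15W_mem hn hy' i
    · intro a ha b hb h
      have ha' : s15P a := ha
      have hb' : s15P b := hb
      rw [hWeq i a ha', hWeq i b hb'] at h
      calc a = s15W i (s15W i a) := (s15W_invol hn ha' i).symm
        _ = s15W i (s15W i b) := by rw [h]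
        _ = b := s15W_invol hn hb' i
    · intro y hy
      have hy' : s15P y := hy
      refine ⟨s15W i y, s15W_mem hn hy' i, ?_⟩
      rw [hWeq i _ (s15W_mem hn hy' i)]
      exact s15W_invol hn hy' i
  · rw [hcl]
    exact ⟨(MonoidHom.ofInjective (s15phi_inj hn)).symm⟩
  · rw [hcl]
    have c1 : Nat.card ↥(s15phi hn).range = Nat.card (Fin n → Multiplicative (ZMod 2)) :=
      (Nat.card_congr (MonoidHom.ofInjective (s15phi_inj hn)).toEquiv).symm
    rw [c1, Nat.card_pi]
    have h2 : Nat.card (Multiplicative (ZMod 2)) = 2 :=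
      (Nat.card_congr Multiplicative.toAdd).trans (Nat.card_zmod 2)
    simp [h2]
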